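/- arXiv:2211.16842 — 2 statements merged into one kernel-verified Lean document; each statement's English description precedes it below -/
import Mathlib

section
/- Let M = 3^(15/2)/(4·7^(7/2)). There exists a (5,1)-admissible tuple y₁,…,y₅ of complex numbers with P_{5,1}(y) = ∏_{1≤i<j≤5} |1 − yᵢ/yⱼ| = 16·M; hence the upper bound 16·M for P_{5,1} is best possible. -/
open Complex Finset

/-- A tuple `y₁, …, yₙ` of nonzero complex numbers is `(n,1)`-admissible if the absolute
values are nondecreasing, exactly two of the `yᵢ` are non-real, and these two are complex
conjugates of each other (all remaining entries being real). -/
def IsAdmissible (n : ℕ) (y : Fin n → ℂ) : Prop :=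
  (∀ k, y k ≠ 0) ∧
  (∀ k l, k ≤ l → ‖y k‖ ≤ ‖y l‖) ∧
  ∃ i j : Fin n, i ≠ j ∧ (y i).im ≠ 0 ∧ (y j).im ≠ 0 ∧
    y j = (starRingEnd ℂ) (y i) ∧ ∀ k, k ≠ i → k ≠ j → (y k).im = 0

/-- `P n y = ∏_{1 ≤ i < j ≤ n} |1 - yᵢ/yⱼ|`. -/
noncomputable def P (n : ℕ) (y : Fin n → ℂ) : ℝ :=
  ∏ p ∈ Finset.univ.filter (fun p : Fin n × Fin n => p.1 < p.2),
    ‖1 - y p.1 / y p.2‖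

lemma P_expand (y : Fin 5 → ℂ) : P 5 y =
    ‖1 - y 0 / y 1‖ * ‖1 - y 0 / y 2‖ *
    ‖1 - y 0 / y 3‖ * ‖1 - y 0 / y 4‖ *
    ‖1 - y 1 / y 2‖ * ‖1 - y 1 / y 3‖ *
    ‖1 - y 1 / y 4‖ * ‖1 - y 2 / y 3‖ *
    ‖1 - y 2 / y 4‖ * ‖1 - y 3 / y 4‖ := by
  rw [P, Finset.prod_filter, Fintype.prod_prod_type]
  simp [Fin.prod_univ_five]
  norm_num [Fin.lt_def]
  ring_nf
  tauto


noncomputable def yw : Fin 5 → ℂ :=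
  ![⟨-2, 0⟩, ⟨1, 3 * Real.sqrt 3⟩, ⟨1, -(3 * Real.sqrt 3)⟩,
    ⟨-(2 * Real.sqrt 7), 0⟩, ⟨2 * Real.sqrt 7, 0⟩]


set_option maxHeartbeats 2000000 in
lemma yw_P_val : P 5 yw = Real.sqrt (229582512 / 823543) := by
  have h3 : Real.sqrt 3 ^ 2 = 3 := Real.sq_sqrt (by norm_num)
  have h7 : Real.sqrt 7 ^ 2 = 7 := Real.sq_sqrt (by norm_num)
  have hs3 : (0:ℝ) < Real.sqrt 3 := Real.sqrt_pos.mpr (by norm_num)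
  have hs7 : (0:ℝ) < Real.sqrt 7 := Real.sqrt_pos.mpr (by norm_num)
  have hy1 : yw 1 ≠ 0 := by
    show (⟨1, 3 * Real.sqrt 3⟩ : ℂ) ≠ 0
    simp [Complex.ext_iff]
  have hy2 : yw 2 ≠ 0 := by
    show (⟨1, -(3 * Real.sqrt 3)⟩ : ℂ) ≠ 0
    simp [Complex.ext_iff]
  have hy3 : yw 3 ≠ 0 := by
    show (⟨-(2 * Real.sqrt 7), 0⟩ : ℂ) ≠ 0
    simp [Complex.ext_iff, hs7.ne']
  have hy4 : yw 4 ≠ 0 := by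
    show (⟨2 * Real.sqrt 7, 0⟩ : ℂ) ≠ 0
    simp [Complex.ext_iff, hs7.ne']
  have hL : 0 ≤ P 5 yw := by
    rw [P_expand]; positivity
  have hsq : P 5 yw ^ 2 = 229582512 / 823543 := by
    rw [P_expand]
    have expand : (‖1 - yw 0 / yw 1‖ * ‖1 - yw 0 / yw 2‖ *
      ‖1 - yw 0 / yw 3‖ * ‖1 - yw 0 / yw 4‖ *
      ‖1 - yw 1 / yw 2‖ * ‖1 - yw 1 / yw 3‖ *
      ‖1 - yw 1 / yw 4‖ * ‖1 - yw 2 / yw 3‖ *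
      ‖1 - yw 2 / yw 4‖ * ‖1 - yw 3 / yw 4‖) ^ 2 =
      ‖1 - yw 0 / yw 1‖ ^ 2 * ‖1 - yw 0 / yw 2‖ ^ 2 *
      ‖1 - yw 0 / yw 3‖ ^ 2 * ‖1 - yw 0 / yw 4‖ ^ 2 *
      ‖1 - yw 1 / yw 2‖ ^ 2 * ‖1 - yw 1 / yw 3‖ ^ 2 *
      ‖1 - yw 1 / yw 4‖ ^ 2 * ‖1 - yw 2 / yw 3‖ ^ 2 *
      ‖1 - yw 2 / yw 4‖ ^ 2 * ‖1 - yw 3 / yw 4‖ ^ 2 := by ring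
    rw [expand]
    simp only [Complex.sq_norm]
    rw [one_sub_div hy1, one_sub_div hy2, one_sub_div hy3, one_sub_div hy4,
        one_sub_div hy2, one_sub_div hy3, one_sub_div hy4, one_sub_div hy3,
        one_sub_div hy4, one_sub_div hy4]
    simp only [map_div₀]
    have d1 : Complex.normSq (yw 1) = 28 := by
      show Complex.normSq ⟨1, 3 * Real.sqrt 3⟩ = 28
      simp [Complex.normSq_apply]; linear_combination 9 * h3
    have d2 : Complex.normSq (yw 2) = 28 := by
      show Complex.normSq ⟨1, -(3 * Real.sqrt 3)⟩ = 28
      simp [Complex.normSq_apply]; linear_combination 9 * h3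
    have d3 : Complex.normSq (yw 3) = 28 := by
      show Complex.normSq ⟨-(2 * Real.sqrt 7), 0⟩ = 28
      simp [Complex.normSq_apply]; linear_combination 4 * h7
    have d4 : Complex.normSq (yw 4) = 28 := by
      show Complex.normSq ⟨2 * Real.sqrt 7, 0⟩ = 28
      simp [Complex.normSq_apply]; linear_combination 4 * h7
    have n01 : Complex.normSq (yw 1 - yw 0) = 36 := by
      show Complex.normSq ((⟨1, 3 * Real.sqrt 3⟩ : ℂ) - ⟨-2, 0⟩) = 36
      simp [Complex.normSq_apply]; linear_combination 9 * h3
    have n02 : Complex.normSq (yw 2 - yw 0) = 36 := by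
      show Complex.normSq ((⟨1, -(3 * Real.sqrt 3)⟩ : ℂ) - ⟨-2, 0⟩) = 36
      simp [Complex.normSq_apply]; linear_combination 9 * h3
    have n03 : Complex.normSq (yw 3 - yw 0) = 32 - 8 * Real.sqrt 7 := by
      show Complex.normSq ((⟨-(2 * Real.sqrt 7), 0⟩ : ℂ) - ⟨-2, 0⟩) = _
      simp [Complex.normSq_apply]; linear_combination 4 * h7
    have n04 : Complex.normSq (yw 4 - yw 0) = 32 + 8 * Real.sqrt 7 := by
      show Complex.normSq ((⟨2 * Real.sqrt 7, 0⟩ : ℂ) - ⟨-2, 0⟩) = _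
      simp [Complex.normSq_apply]; linear_combination 4 * h7
    have n12 : Complex.normSq (yw 2 - yw 1) = 108 := by
      show Complex.normSq ((⟨1, -(3 * Real.sqrt 3)⟩ : ℂ) - ⟨1, 3 * Real.sqrt 3⟩) = _
      simp [Complex.normSq_apply]; linear_combination 36 * h3
    have n13 : Complex.normSq (yw 3 - yw 1) = 56 + 4 * Real.sqrt 7 := by
      show Complex.normSq ((⟨-(2 * Real.sqrt 7), 0⟩ : ℂ) - ⟨1, 3 * Real.sqrt 3⟩) = _
      simp [Complex.normSq_apply]; linear_combination 4 * h7 + 9 * h3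
    have n14 : Complex.normSq (yw 4 - yw 1) = 56 - 4 * Real.sqrt 7 := by
      show Complex.normSq ((⟨2 * Real.sqrt 7, 0⟩ : ℂ) - ⟨1, 3 * Real.sqrt 3⟩) = _
      simp [Complex.normSq_apply]; linear_combination 4 * h7 + 9 * h3
    have n23 : Complex.normSq (yw 3 - yw 2) = 56 + 4 * Real.sqrt 7 := by
      show Complex.normSq ((⟨-(2 * Real.sqrt 7), 0⟩ : ℂ) - ⟨1, -(3 * Real.sqrt 3)⟩) = _
      simp [Complex.normSq_apply]; linear_combination 4 * h7 + 9 * h3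
    have n24 : Complex.normSq (yw 4 - yw 2) = 56 - 4 * Real.sqrt 7 := by
      show Complex.normSq ((⟨2 * Real.sqrt 7, 0⟩ : ℂ) - ⟨1, -(3 * Real.sqrt 3)⟩) = _
      simp [Complex.normSq_apply]; linear_combination 4 * h7 + 9 * h3
    have n34 : Complex.normSq (yw 4 - yw 3) = 112 := by
      show Complex.normSq ((⟨2 * Real.sqrt 7, 0⟩ : ℂ) - ⟨-(2 * Real.sqrt 7), 0⟩) = _
      simp [Complex.normSq_apply]; linear_combination 16 * h7
    rw [d1, d2, d3, d4, n01, n02, n03, n04, n12, n13, n14, n23, n24, n34]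
    have h74 : Real.sqrt 7 ^ 4 = 49 := by nlinarith [h7]
    have h76 : Real.sqrt 7 ^ 6 = 343 := by nlinarith [h7]
    ring_nf
    linarith [h7, h74, h76]
  calc P 5 yw = Real.sqrt ((P 5 yw) ^ 2) := (Real.sqrt_sq hL).symm
  _ = Real.sqrt (229582512 / 823543) := by rw [hsq]

lemma yw_adm : IsAdmissible 5 yw := by
  have h3 : Real.sqrt 3 ^ 2 = 3 := Real.sq_sqrt (by norm_num)
  have h7 : Real.sqrt 7 ^ 2 = 7 := Real.sq_sqrt (by norm_num)
  have hs3 : (0:ℝ) < Real.sqrt 3 := Real.sqrt_pos.mpr (by norm_num)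
  have hs7 : (0:ℝ) < Real.sqrt 7 := Real.sqrt_pos.mpr (by norm_num)
  have a0 : ‖yw 0‖ = 2 := by
    show ‖(⟨-2, 0⟩ : ℂ)‖ = 2
    rw [Complex.norm_def, show Complex.normSq ⟨-2, 0⟩ = 2 ^ 2 by
      simp [Complex.normSq_apply]; norm_num]
    exact Real.sqrt_sq (by norm_num)
  have key : ∀ z : ℂ, Complex.normSq z = 28 → ‖z‖ = 2 * Real.sqrt 7 := by
    intro z hz
    rw [Complex.norm_def, hz, show (28:ℝ) = (2 * Real.sqrt 7) ^ 2 by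
      rw [mul_pow, h7]; norm_num]
    exact Real.sqrt_sq (by positivity)
  have a1 : ‖yw 1‖ = 2 * Real.sqrt 7 := key _ (by
    show Complex.normSq ⟨1, 3 * Real.sqrt 3⟩ = 28
    simp [Complex.normSq_apply]; linear_combination 9 * h3)
  have a2 : ‖yw 2‖ = 2 * Real.sqrt 7 := key _ (by
    show Complex.normSq ⟨1, -(3 * Real.sqrt 3)⟩ = 28
    simp [Complex.normSq_apply]; linear_combination 9 * h3)
  have a3 : ‖yw 3‖ = 2 * Real.sqrt 7 := key _ (by
    show Complex.normSq ⟨-(2 * Real.sqrt 7), 0⟩ = 28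
    simp [Complex.normSq_apply]; linear_combination 4 * h7)
  have a4 : ‖yw 4‖ = 2 * Real.sqrt 7 := key _ (by
    show Complex.normSq ⟨2 * Real.sqrt 7, 0⟩ = 28
    simp [Complex.normSq_apply]; linear_combination 4 * h7)
  have h2le : (2:ℝ) ≤ 2 * Real.sqrt 7 := by nlinarith [h7, hs7]
  refine ⟨?_, ?_, 1, 2, ?_, ?_, ?_, ?_, ?_⟩
  · intro k
    fin_cases k
    · show (⟨-2, 0⟩ : ℂ) ≠ 0; simp [Complex.ext_iff]
    · show (⟨1, 3 * Real.sqrt 3⟩ : ℂ) ≠ 0; simp [Complex.ext_iff]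
    · show (⟨1, -(3 * Real.sqrt 3)⟩ : ℂ) ≠ 0; simp [Complex.ext_iff]
    · show (⟨-(2 * Real.sqrt 7), 0⟩ : ℂ) ≠ 0; simp [Complex.ext_iff, hs7.ne']
    · show (⟨2 * Real.sqrt 7, 0⟩ : ℂ) ≠ 0; simp [Complex.ext_iff, hs7.ne']
  · intro k l hkl
    fin_cases k <;> fin_cases l <;>
      simp_all [a0, a1, a2, a3, a4]
  · decide
  · show (3 * Real.sqrt 3 : ℝ) ≠ 0; positivity
  · show (-(3 * Real.sqrt 3) : ℝ) ≠ 0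
    simp only [ne_eq, neg_eq_zero]
    positivity
  · show (⟨1, -(3 * Real.sqrt 3)⟩ : ℂ) = (starRingEnd ℂ) ⟨1, 3 * Real.sqrt 3⟩
    simp [Complex.ext_iff]
  · intro k hk1 hk2
    fin_cases k
    · rfl
    · exact absurd rfl hk1
    · exact absurd rfl hk2
    · rfl
    · rfl


lemma rhs_val :
    16 * ((3 : ℝ) ^ ((15 : ℝ) / 2) / (4 * (7 : ℝ) ^ ((7 : ℝ) / 2))) =
      Real.sqrt (229582512 / 823543) := by
  have hA : (3:ℝ) ^ ((15:ℝ)/2) = Real.sqrt 14348907 := by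
    rw [show ((15:ℝ)/2) = ((15:ℕ):ℝ) * (1/2 : ℝ) by norm_num,
      Real.rpow_mul (by norm_num), Real.rpow_natCast, ← Real.sqrt_eq_rpow]
    norm_num
  have hB : (7:ℝ) ^ ((7:ℝ)/2) = Real.sqrt 823543 := by
    rw [show ((7:ℝ)/2) = ((7:ℕ):ℝ) * (1/2 : ℝ) by norm_num,
      Real.rpow_mul (by norm_num), Real.rpow_natCast, ← Real.sqrt_eq_rpow]
    norm_num
  rw [hA, hB]
  rw [show (229582512:ℝ) / 823543 = 14348907 * 16 / 823543 by norm_num,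
    Real.sqrt_div' _ (by norm_num), Real.sqrt_mul (by norm_num),
    show (16:ℝ) = 4 ^ 2 by norm_num, Real.sqrt_sq (by norm_num)]
  have : Real.sqrt 823543 > 0 := Real.sqrt_pos.mpr (by norm_num)
  field_simp


theorem P51_eq_sixteenM :
    ∃ y : Fin 5 → ℂ, IsAdmissible 5 y ∧
      P 5 y = 16 * ((3 : ℝ) ^ ((15 : ℝ) / 2) / (4 * (7 : ℝ) ^ ((7 : ℝ) / 2))) := by
  exact ⟨yw, yw_adm, by rw [yw_P_val, rhs_val]⟩
end

section
/- Let n ≥ 2, let ε = (ε₁,…,ε_{n−1}) ∈ {−1,+1}^{n−1}, and define the configuration Q_{n−1,ε}(x₁,…,x_{n−1}) = ∏_{1 ≤ i ≤ j ≤ n−1} (1 − (∏_{k=i}^{j} ε_k)(∏_{k=i}^{j} x_k)). Then for all (x₁,…,x_{n−1}) ∈ [0,1]^{n−1} one has Q_{n−1,ε}(x) ≤ Q_{n−1,ε₋}(x), where ε₋ = (−1,−1,…,−1); explicitly, ∏_{1≤i≤j≤n−1} (1 − (∏_{k=i}^j ε_k)(∏_{k=i}^j x_k)) ≤ ∏_{1≤i≤j≤n−1}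 (1 − (−1)^{j−i+1} ∏_{k=i}^j x_k). -/
open Finset

/-- The configuration `Q_{n−1,ε}(x) = ∏_{1 ≤ i ≤ j ≤ n−1} (1 − (∏_{k=i}^j ε_k)(∏_{k=i}^j x_k))`
(indices written here zero-based). -/
noncomputable def Qconf (m : ℕ) (ε x : Fin m → ℝ) : ℝ :=
  ∏ p ∈ Finset.univ.filter (fun p : Fin m × Fin m => p.1 ≤ p.2),
    (1 - (∏ k ∈ Finset.Icc p.1 p.2, ε k) * ∏ k ∈ Finset.Icc p.1 p.2, x k)

namespace QP

open Topology Filter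

/-- product of `y` over `[a, b)` -/
def PP (y : ℕ → ℝ) (a b : ℕ) : ℝ := ∏ k ∈ Finset.Ico a b, y k

def pairs (m : ℕ) : Finset (ℕ × ℕ) :=
  (Finset.range (m+1) ×ˢ Finset.range (m+1)).filter fun p => p.1 < p.2

def alt : ℕ → ℝ := fun a => (-1) ^ a

def TS (σ y : ℕ → ℝ) (m : ℕ) : ℝ := ∑ a ∈ Finset.range (m+1), σ a * PP y a m

def FS (σ y : ℕ → ℝ) (m : ℕ) : ℝ := ∑ p ∈ pairs m, σ p.1 * σ p.2 * PP y p.1 p.2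

lemma mem_pairs {m : ℕ} {p : ℕ × ℕ} : p ∈ pairs m ↔ p.1 < p.2 ∧ p.2 ≤ m := by
  simp only [pairs, Finset.mem_filter, Finset.mem_product, Finset.mem_range]
  omega

lemma pairs_succ (m : ℕ) :
    pairs (m+1) = pairs m ∪ (Finset.range (m+1)).image (fun a => (a, m+1)) := by
  ext ⟨a, b⟩
  simp only [mem_pairs, Finset.mem_union, Finset.mem_image, Finset.mem_range, Prod.mk.injEq]
  constructor
  · rintro ⟨h1, h2⟩
    rcases eq_or_lt_of_le h2 with h | h
    · exact Or.inr ⟨a, by omega, rfl, h.symm⟩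
    · exact Or.inl ⟨h1, by omega⟩
  · rintro (⟨h1, h2⟩ | ⟨c, hc, rfl, rfl⟩) <;> omega

lemma sum_pairs_succ (m : ℕ) (F : ℕ × ℕ → ℝ) :
    ∑ p ∈ pairs (m+1), F p = (∑ p ∈ pairs m, F p) + ∑ a ∈ Finset.range (m+1), F (a, m+1) := by
  rw [pairs_succ, Finset.sum_union, Finset.sum_image]
  · intro a _ b _ h; exact (Prod.mk.injEq _ _ _ _ ▸ h).1
  · rw [Finset.disjoint_right]
    rintro ⟨a, b⟩ hb hp
    simp only [Finset.mem_image, Finset.mem_range, Prod.mk.injEq] at hb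
    obtain ⟨c, _, rfl, rfl⟩ := hb
    exact absurd (mem_pairs.mp hp).2 (by omega)

lemma PP_same (y : ℕ → ℝ) (a : ℕ) : PP y a a = 1 := by simp [PP]

lemma PP_succ (y : ℕ → ℝ) {a m : ℕ} (h : a ≤ m) : PP y a (m+1) = PP y a m * y m := by
  rw [PP, PP, Finset.prod_Ico_succ_top h]

lemma TS_succ (σ y : ℕ → ℝ) (m : ℕ) :
    TS σ y (m+1) = σ (m+1) + y m * TS σ y m := by
  rw [TS, Finset.sum_range_succ, PP_same, TS, Finset.mul_sum]
  have h : ∀ a ∈ Finset.range (m+1), σ a * PP y a (m+1) = y m * (σ a * PP y a m) :=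
    fun a ha => by
      rw [PP_succ y (Nat.lt_succ_iff.mp (Finset.mem_range.mp ha))]; ring
  rw [Finset.sum_congr rfl h]
  ring

lemma FS_succ (σ y : ℕ → ℝ) (m : ℕ) :
    FS σ y (m+1) = FS σ y m + σ (m+1) * (y m * TS σ y m) := by
  rw [FS, sum_pairs_succ, FS]
  congr 1
  rw [TS, Finset.mul_sum, Finset.mul_sum]
  refine Finset.sum_congr rfl fun a ha => ?_
  rw [PP_succ y (by simpa using Nat.lt_succ_iff.mp (Finset.mem_range.mp ha))]
  ring

lemma alt_succ (m : ℕ) : alt (m+1) = -alt m := by simp [alt, pow_succ]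

lemma alt_cases (m : ℕ) : alt m = 1 ∨ alt m = -1 := by
  rcases Nat.even_or_odd m with h | h
  · exact Or.inl (h.neg_one_pow)
  · exact Or.inr (h.neg_one_pow)

lemma int_consec (z : ℤ) : 0 ≤ z * (z + 1) := by nlinarith [sq_nonneg (2*z+1)]

lemma int_consec' (z : ℤ) : 0 ≤ z * (z - 1) := by nlinarith [sq_nonneg (2*z-1)]

lemma sq_ge {T t : ℝ} {m : ℕ} (hz : ∃ z : ℤ, T - t = 2 * z)
    (h1 : t = 0 ∨ t = alt m) : t ^ 2 ≤ T ^ 2 := by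
  obtain ⟨z, hz⟩ := hz
  rcases h1 with rfl | h1
  · nlinarith [sq_nonneg T]
  rcases (h1 ▸ alt_cases m : t = 1 ∨ t = -1) with rfl | rfl
  · have h2 : (0:ℝ) ≤ (z : ℝ) * ((z:ℝ) + 1) := by exact_mod_cast int_consec z
    have hT : T = 2*(z:ℝ) + 1 := by linarith
    rw [hT]; nlinarith [h2]
  · have h2 : (0:ℝ) ≤ (z : ℝ) * ((z:ℝ) - 1) := by exact_mod_cast int_consec' z
    have hT : T = 2*(z:ℝ) - 1 := by linarith
    rw [hT]; nlinarith [h2]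

lemma inv01 (y σ : ℕ → ℝ) (hy : ∀ k, y k = 0 ∨ y k = 1)
    (hσ : ∀ a, σ a = 1 ∨ σ a = -1) (m : ℕ) :
    (∃ z : ℤ, TS σ y m - TS alt y m = 2 * z) ∧
    (TS alt y m = 0 ∨ TS alt y m = alt m) ∧
    (FS alt y m + (TS σ y m ^ 2 - TS alt y m ^ 2) / 2 ≤ FS σ y m) := by
  induction m with
  | zero =>
    have hT : TS σ y 0 = σ 0 := by simp [TS, PP_same]
    have hTa : TS alt y 0 = 1 := by simp [TS, PP_same, alt]
    have hF : FS σ y 0 = 0 := by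
      rw [FS]
      have : pairs 0 = ∅ := by
        ext p; simp only [mem_pairs, Finset.notMem_empty, iff_false]; omega
      simp [this]
    have hFa : FS alt y 0 = 0 := by
      rw [FS]
      have : pairs 0 = ∅ := by
        ext p; simp only [mem_pairs, Finset.notMem_empty, iff_false]; omega
      simp [this]
    refine ⟨?_, Or.inr (by simp [hTa, alt]), ?_⟩
    · rcases hσ 0 with h | h
      · exact ⟨0, by rw [hT, hTa, h]; ring⟩
      · exact ⟨-1, by rw [hT, hTa, h]; push_cast; ring⟩
    · rcases hσ 0 with h | h <;> rw [hF, hFa, hT, hTa, h] <;> norm_num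
  | succ m ih =>
    obtain ⟨⟨z, hz⟩, halt, hf⟩ := ih
    have hTT : TS alt y m ^ 2 ≤ TS σ y m ^ 2 := sq_ge ⟨z, hz⟩ halt
    have he := hy m
    have hs1 := hσ (m+1)
    have ha1 := alt_cases (m+1)
    refine ⟨?_, ?_, ?_⟩
    · rw [TS_succ, TS_succ]
      rcases he with he | he
      · rcases hs1 with h | h <;> rcases ha1 with h' | h'
        · exact ⟨0, by rw [he, h, h']; ring⟩
        · exact ⟨1, by rw [he, h, h']; push_cast; ring⟩
        · exact ⟨-1, by rw [he, h, h']; push_cast; ring⟩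
        · exact ⟨0, by rw [he, h, h']; ring⟩
      · rcases hs1 with h | h <;> rcases ha1 with h' | h'
        · exact ⟨z, by rw [he, h, h']; push_cast; linarith⟩
        · exact ⟨z+1, by rw [he, h, h']; push_cast; linarith⟩
        · exact ⟨z-1, by rw [he, h, h']; push_cast; linarith⟩
        · exact ⟨z, by rw [he, h, h']; push_cast; linarith⟩
    · rw [TS_succ]
      rcases he with he | he
      · rw [he]; exact Or.inr (by ring)
      · rcases halt with h | h
        · rw [he, h]; exact Or.inr (by ring)
        · rw [he, h, alt_succ]; exact Or.inl (by ring)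
    · rw [FS_succ, FS_succ, TS_succ, TS_succ]
      have hs2 : σ (m+1) ^ 2 = 1 := by rcases hs1 with h | h <;> rw [h] <;> norm_num
      have ha2 : alt (m+1) ^ 2 = 1 := by rcases ha1 with h | h <;> rw [h] <;> norm_num
      rcases he with he | he <;> rw [he] <;> nlinarith [hf, hTT]

lemma key01 (y σ : ℕ → ℝ) (hy : ∀ k, y k = 0 ∨ y k = 1)
    (hσ : ∀ a, σ a = 1 ∨ σ a = -1) (m : ℕ) : FS alt y m ≤ FS σ y m := by
  obtain ⟨hz, halt, hf⟩ := inv01 y σ hy hσ m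
  have := sq_ge hz halt
  linarith


lemma PP_update (y : ℕ → ℝ) (k : ℕ) (t : ℝ) (a b : ℕ) :
    PP (Function.update y k t) a b =
      if k ∈ Finset.Ico a b then t * ∏ j ∈ (Finset.Ico a b).erase k, y j
      else PP y a b := by
  split_ifs with h
  · rw [PP, Finset.prod_update_of_mem h, Finset.sdiff_singleton_eq_erase]
  · rw [PP, PP]
    refine Finset.prod_congr rfl fun j hj => ?_
    have hjk : j ≠ k := fun hjk => h (hjk ▸ hj)
    exact Function.update_of_ne hjk _ _

def DS (σ y : ℕ → ℝ) (m : ℕ) : ℝ :=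
  ∑ p ∈ pairs m, (σ p.1 * σ p.2 - alt p.1 * alt p.2) * PP y p.1 p.2

lemma DS_eq (σ y : ℕ → ℝ) (m : ℕ) : DS σ y m = FS σ y m - FS alt y m := by
  rw [DS, FS, FS, ← Finset.sum_sub_distrib]
  exact Finset.sum_congr rfl fun p _ => by ring

lemma DS_affine (σ y : ℕ → ℝ) (m k : ℕ) (t : ℝ) :
    DS σ (Function.update y k t) m =
      (1 - t) * DS σ (Function.update y k 0) m + t * DS σ (Function.update y k 1) m := by
  rw [DS, DS, DS, Finset.mul_sum, Finset.mul_sum, ← Finset.sum_add_distrib]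
  refine Finset.sum_congr rfl fun p _ => ?_
  rw [PP_update, PP_update, PP_update]
  split_ifs with h
  · ring
  · ring

lemma key_free (σ : ℕ → ℝ) (hσ : ∀ a, σ a = 1 ∨ σ a = -1) (m : ℕ) (s : Finset ℕ) :
    ∀ y : ℕ → ℝ, (∀ k, 0 ≤ y k ∧ y k ≤ 1) → (∀ k ∉ s, y k = 0 ∨ y k = 1) →
      0 ≤ DS σ y m := by
  induction s using Finset.induction_on with
  | empty =>
    intro y _ h01
    rw [DS_eq]
    have := key01 y σ (fun k => h01 k (Finset.notMem_empty k)) hσ m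
    linarith
  | insert k s hk ih =>
    intro y hy h01
    have h0 : 0 ≤ DS σ (Function.update y k 0) m := by
      refine ih _ (fun j => ?_) (fun j hj => ?_)
      · rcases eq_or_ne j k with rfl | hne
        · simp
        · rw [Function.update_of_ne hne]; exact hy j
      · rcases eq_or_ne j k with rfl | hne
        · simp
        · rw [Function.update_of_ne hne]
          exact h01 j (by simp [Finset.mem_insert, hne, hj])
    have h1 : 0 ≤ DS σ (Function.update y k 1) m := by
      refine ih _ (fun j => ?_) (fun j hj => ?_)
      · rcases eq_or_ne j k with rfl | hne
        · simp
        · rw [Function.update_of_ne hne]; exact hy j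
      · rcases eq_or_ne j k with rfl | hne
        · simp
        · rw [Function.update_of_ne hne]
          exact h01 j (by simp [Finset.mem_insert, hne, hj])
    have := DS_affine σ y m k (y k)
    rw [Function.update_eq_self] at this
    rw [this]
    have hk0 := (hy k).1
    have hk1 := (hy k).2
    have : (0:ℝ) ≤ 1 - y k := by linarith
    positivity

lemma PP_congr {y y' : ℕ → ℝ} {m : ℕ} (h : ∀ k < m, y k = y' k) {p : ℕ × ℕ}
    (hp : p ∈ pairs m) : PP y p.1 p.2 = PP y' p.1 p.2 := by
  refine Finset.prod_congr rfl fun j hj => ?_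
  rw [Finset.mem_Ico] at hj
  exact h j (by have := (mem_pairs.mp hp).2; omega)

lemma key (σ y : ℕ → ℝ) (hσ : ∀ a, σ a = 1 ∨ σ a = -1)
    (hy : ∀ k, 0 ≤ y k ∧ y k ≤ 1) (m : ℕ) : FS alt y m ≤ FS σ y m := by
  set y' : ℕ → ℝ := fun k => if k < m then y k else 0 with hy'
  have hcong : ∀ k < m, y k = y' k := fun k hk => by simp [hy', hk]
  have hFσ : FS σ y m = FS σ y' m :=
    Finset.sum_congr rfl fun p hp => by rw [PP_congr hcong hp]
  have hFa : FS alt y m = FS alt y' m :=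
    Finset.sum_congr rfl fun p hp => by rw [PP_congr hcong hp]
  rw [hFσ, hFa]
  have h := key_free σ hσ m (Finset.range m) y'
    (fun k => by by_cases hk : k < m <;> simp [hy', hk, hy k])
    (fun k hk => by simp only [Finset.mem_range, not_lt] at hk; simp [hy', Nat.not_lt.mpr hk])
  rw [DS_eq] at h
  linarith


noncomputable def cn (n : ℕ) : ℝ := (1 - (-1:ℝ)^(n+1))/(2*((n:ℝ)+1))

lemma cn_nonneg (n : ℕ) : 0 ≤ cn n := by
  have h : (-1:ℝ)^(n+1) = 1 ∨ (-1:ℝ)^(n+1) = -1 := by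
    rcases Nat.even_or_odd (n+1) with h | h
    · exact Or.inl h.neg_one_pow
    · exact Or.inr h.neg_one_pow
  have hd : (0:ℝ) < 2*((n:ℝ)+1) := by positivity
  rcases h with h | h <;> rw [cn, h] <;> positivity

noncomputable def AT (p : ℝ) : ℝ := (Real.log (1+p) - Real.log (1-p))/2

lemma hasSum_AT {p : ℝ} (h0 : 0 ≤ p) (h1 : p < 1) :
    HasSum (fun n : ℕ => cn n * p^(n+1)) (AT p) := by
  have habs : |p| < 1 := abs_lt.mpr ⟨by linarith, h1⟩
  have habs' : |(-p)| < 1 := by rwa [abs_neg]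
  have h1s := Real.hasSum_pow_div_log_of_abs_lt_one habs
  have h2s := Real.hasSum_pow_div_log_of_abs_lt_one habs'
  have h3 := (h1s.sub h2s).div_const 2
  have hfun : (fun n : ℕ => cn n * p^(n+1)) =
      fun n : ℕ => (p^(n+1)/((n:ℝ)+1) - (-p)^(n+1)/((n:ℝ)+1))/2 := by
    funext n
    have hn : ((n:ℝ)+1) ≠ 0 := by positivity
    rw [neg_pow, cn]
    field_simp
  rw [hfun, AT]
  rw [show (Real.log (1+p) - Real.log (1-p))/2 = (-Real.log (1 - p) - -Real.log (1 - -p)) / 2 by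
    rw [show (1:ℝ) - -p = 1 + p from by ring]; ring]
  exact h3

lemma log_factor {s p : ℝ} (hs : s = 1 ∨ s = -1) (h0 : 0 ≤ p) (h1 : p < 1) :
    Real.log (1 - s * p) = Real.log (1 - p^2)/2 - s * AT p := by
  have hp1 : (0:ℝ) < 1 - p := by linarith
  have hp2 : (0:ℝ) < 1 + p := by linarith
  have hsq : 1 - p^2 = (1-p)*(1+p) := by ring
  rcases hs with rfl | rfl
  · rw [one_mul, hsq, Real.log_mul (ne_of_gt hp1) (ne_of_gt hp2), AT]; ring
  · rw [show (1:ℝ) - -1*p = 1+p from by ring, hsq,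
      Real.log_mul (ne_of_gt hp1) (ne_of_gt hp2), AT]; ring

lemma sign_mul {a b : ℝ} (ha : a = 1 ∨ a = -1) (hb : b = 1 ∨ b = -1) :
    a * b = 1 ∨ a * b = -1 := by
  rcases ha with rfl | rfl <;> rcases hb with rfl | rfl <;> norm_num

lemma PP_nonneg {x : ℕ → ℝ} (hx : ∀ k, 0 ≤ x k) (a b : ℕ) : 0 ≤ PP x a b :=
  Finset.prod_nonneg fun k _ => hx k

lemma PP_lt_one {x : ℕ → ℝ} (hx : ∀ k, 0 ≤ x k ∧ x k < 1) {a b : ℕ} (hab : a < b) :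
    PP x a b < 1 := by
  obtain ⟨c, rfl⟩ : ∃ c, b = c + 1 := ⟨b - 1, by omega⟩
  rw [PP, Finset.prod_Ico_succ_top (by omega : a ≤ c)]
  have h1 : ∏ k ∈ Finset.Ico a c, x k ≤ 1 :=
    Finset.prod_le_one (fun k _ => (hx k).1) (fun k _ => le_of_lt (hx k).2)
  calc (∏ k ∈ Finset.Ico a c, x k) * x c ≤ 1 * x c :=
        mul_le_mul_of_nonneg_right h1 (hx c).1
    _ = x c := one_mul _
    _ < 1 := (hx c).2

lemma main' (m : ℕ) (σ x : ℕ → ℝ) (hσ : ∀ a, σ a = 1 ∨ σ a = -1)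
    (hx : ∀ k, 0 ≤ x k ∧ x k < 1) :
    ∏ p ∈ pairs m, (1 - σ p.1 * σ p.2 * PP x p.1 p.2) ≤
      ∏ p ∈ pairs m, (1 - alt p.1 * alt p.2 * PP x p.1 p.2) := by
  have hP0 : ∀ p : ℕ × ℕ, 0 ≤ PP x p.1 p.2 := fun p => PP_nonneg (fun k => (hx k).1) _ _
  have hP1 : ∀ p ∈ pairs m, PP x p.1 p.2 < 1 := fun p hp => PP_lt_one hx (mem_pairs.mp hp).1
  have hfac : ∀ (τ : ℕ → ℝ), (∀ a, τ a = 1 ∨ τ a = -1) →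
      ∀ p ∈ pairs m, 0 < 1 - τ p.1 * τ p.2 * PP x p.1 p.2 := by
    intro τ hτ p hp
    rcases sign_mul (hτ p.1) (hτ p.2) with h | h <;> rw [h]
    · nlinarith [hP1 p hp]
    · nlinarith [hP0 p]
  have hLpos : 0 < ∏ p ∈ pairs m, (1 - σ p.1 * σ p.2 * PP x p.1 p.2) :=
    Finset.prod_pos (hfac σ hσ)
  have hRpos : 0 < ∏ p ∈ pairs m, (1 - alt p.1 * alt p.2 * PP x p.1 p.2) :=
    Finset.prod_pos (hfac alt alt_cases)
  -- reduce to comparing the AT-sums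
  have hlogsum : ∀ (τ : ℕ → ℝ), (∀ a, τ a = 1 ∨ τ a = -1) →
      Real.log (∏ p ∈ pairs m, (1 - τ p.1 * τ p.2 * PP x p.1 p.2)) =
        (∑ p ∈ pairs m, Real.log (1 - (PP x p.1 p.2)^2)/2) -
        ∑ p ∈ pairs m, (τ p.1 * τ p.2) * AT (PP x p.1 p.2) := by
    intro τ hτ
    rw [Real.log_prod (fun p hp => ne_of_gt (hfac τ hτ p hp)), ← Finset.sum_sub_distrib]
    refine Finset.sum_congr rfl fun p hp => ?_
    rw [log_factor (sign_mul (hτ p.1) (hτ p.2)) (hP0 p) (hP1 p hp)]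
  -- key sum comparison via HasSum
  have hS : ∀ (τ : ℕ → ℝ), (∀ a, τ a = 1 ∨ τ a = -1) →
      HasSum (fun n : ℕ => ∑ p ∈ pairs m, (τ p.1 * τ p.2) * (cn n * (PP x p.1 p.2)^(n+1)))
        (∑ p ∈ pairs m, (τ p.1 * τ p.2) * AT (PP x p.1 p.2)) := by
    intro τ hτ
    exact hasSum_sum fun p hp => (hasSum_AT (hP0 p) (hP1 p hp)).mul_left _
  have hsum_le : ∑ p ∈ pairs m, (alt p.1 * alt p.2) * AT (PP x p.1 p.2) ≤
      ∑ p ∈ pairs m, (σ p.1 * σ p.2) * AT (PP x p.1 p.2) := by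
    refine hasSum_le (fun n => ?_) (hS alt alt_cases) (hS σ hσ)
    -- per-n inequality
    have hpow : ∀ p ∈ pairs m,
        (PP x p.1 p.2)^(n+1) = PP (fun k => x k ^ (n+1)) p.1 p.2 := by
      intro p _
      rw [PP, PP, ← Finset.prod_pow]
    have hrw : ∀ (τ : ℕ → ℝ),
        ∑ p ∈ pairs m, (τ p.1 * τ p.2) * (cn n * (PP x p.1 p.2)^(n+1)) =
          cn n * FS τ (fun k => x k ^ (n+1)) m := by
      intro τ
      rw [FS, Finset.mul_sum]
      refine Finset.sum_congr rfl fun p hp => ?_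
      rw [hpow p hp]; ring
    rw [hrw, hrw]
    refine mul_le_mul_of_nonneg_left ?_ (cn_nonneg n)
    exact key σ (fun k => x k ^ (n+1)) hσ
      (fun k => ⟨pow_nonneg (hx k).1 _, pow_le_one₀ (hx k).1 (le_of_lt (hx k).2)⟩) m
  have hlog : Real.log (∏ p ∈ pairs m, (1 - σ p.1 * σ p.2 * PP x p.1 p.2)) ≤
      Real.log (∏ p ∈ pairs m, (1 - alt p.1 * alt p.2 * PP x p.1 p.2)) := by
    rw [hlogsum σ hσ, hlogsum alt alt_cases]
    linarith
  calc ∏ p ∈ pairs m, (1 - σ p.1 * σ p.2 * PP x p.1 p.2)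
      = Real.exp (Real.log (∏ p ∈ pairs m, (1 - σ p.1 * σ p.2 * PP x p.1 p.2))) :=
        (Real.exp_log hLpos).symm
    _ ≤ Real.exp (Real.log (∏ p ∈ pairs m, (1 - alt p.1 * alt p.2 * PP x p.1 p.2))) :=
        Real.exp_le_exp.mpr hlog
    _ = _ := Real.exp_log hRpos


lemma main (m : ℕ) (σ x : ℕ → ℝ) (hσ : ∀ a, σ a = 1 ∨ σ a = -1)
    (hx : ∀ k, 0 ≤ x k ∧ x k ≤ 1) :
    ∏ p ∈ pairs m, (1 - σ p.1 * σ p.2 * PP x p.1 p.2) ≤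
      ∏ p ∈ pairs m, (1 - alt p.1 * alt p.2 * PP x p.1 p.2) := by
  set F : (ℕ → ℝ) → ℝ → ℝ := fun τ c =>
    ∏ p ∈ pairs m, (1 - τ p.1 * τ p.2 * PP (fun k => c * x k) p.1 p.2) with hF
  have hcont : ∀ τ : ℕ → ℝ, Continuous (F τ) := by
    intro τ
    apply continuous_finset_prod
    intro p _
    apply Continuous.sub continuous_const
    apply Continuous.mul continuous_const
    simp only [PP]
    apply continuous_finset_prod
    intro k _
    exact continuous_id.mul continuous_const
  have hev : ∀ c ∈ Set.Ioo (0:ℝ) 1, F σ c ≤ F alt c := by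
    intro c hc
    refine main' m σ (fun k => c * x k) hσ (fun k => ⟨mul_nonneg hc.1.le (hx k).1, ?_⟩)
    calc c * x k ≤ c * 1 := mul_le_mul_of_nonneg_left (hx k).2 hc.1.le
      _ = c := mul_one c
      _ < 1 := hc.2
  have hmem : Set.Ioo (0:ℝ) 1 ∈ 𝓝[<] (1:ℝ) :=
    Ioo_mem_nhdsLT_of_mem (by constructor <;> norm_num)
  have h1 : Filter.Tendsto (F σ) (𝓝[<] (1:ℝ)) (𝓝 (F σ 1)) :=
    ((hcont σ).tendsto 1).mono_left nhdsWithin_le_nhds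
  have h2 : Filter.Tendsto (F alt) (𝓝[<] (1:ℝ)) (𝓝 (F alt 1)) :=
    ((hcont alt).tendsto 1).mono_left nhdsWithin_le_nhds
  have hle : F σ 1 ≤ F alt 1 :=
    le_of_tendsto_of_tendsto h1 h2 (Filter.eventually_of_mem hmem hev)
  have hone : (fun k => (1:ℝ) * x k) = x := funext fun k => one_mul _
  rw [hF] at hle
  simp only [hone] at hle
  exact hle


lemma prod_sign {ι : Type*} (s : Finset ι) (f : ι → ℝ) (h : ∀ i ∈ s, f i = 1 ∨ f i = -1) :
    (∏ i ∈ s, f i) = 1 ∨ (∏ i ∈ s, f i) = -1 := by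
  classical
  induction s using Finset.induction_on with
  | empty => simp
  | insert a s hk ih =>
    rw [Finset.prod_insert hk]
    exact sign_mul (h a (Finset.mem_insert_self a s))
      (ih fun i hi => h i (Finset.mem_insert_of_mem hi))

lemma prod_fin_icc {m : ℕ} (f : Fin m → ℝ) (fe : ℕ → ℝ)
    (hfe : ∀ (k : ℕ) (h : k < m), fe k = f ⟨k, h⟩) (i j : Fin m) :
    ∏ k ∈ Finset.Icc i j, f k = ∏ k ∈ Finset.Ico (i : ℕ) ((j : ℕ) + 1), fe k := by
  have hm : 0 < m := i.pos
  rw [Finset.Ico_add_one_right_eq_Icc]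
  refine Finset.prod_nbij' (fun k => (k : ℕ)) (fun a => (⟨a % m, Nat.mod_lt _ hm⟩ : Fin m))
    ?_ ?_ ?_ ?_ ?_
  · intro k hk
    rw [Finset.mem_Icc] at hk ⊢
    exact ⟨hk.1, hk.2⟩
  · intro a ha
    rw [Finset.mem_Icc] at ha ⊢
    have ham : a < m := lt_of_le_of_lt ha.2 j.isLt
    constructor <;> rw [Fin.le_def] <;> simp [Nat.mod_eq_of_lt ham] <;> [exact ha.1; exact ha.2]
  · intro k _
    exact Fin.ext (by simp [Nat.mod_eq_of_lt k.isLt])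
  · intro a ha
    rw [Finset.mem_Icc] at ha
    have ham : a < m := lt_of_le_of_lt ha.2 j.isLt
    simp [Nat.mod_eq_of_lt ham]
  · intro k _
    rw [hfe (k : ℕ) k.isLt]

lemma prod_pairs_fin {m : ℕ} (F : Fin m × Fin m → ℝ) (G : ℕ × ℕ → ℝ)
    (hFG : ∀ p : Fin m × Fin m, p.1 ≤ p.2 → F p = G ((p.1 : ℕ), (p.2 : ℕ) + 1)) :
    ∏ p ∈ Finset.univ.filter (fun p : Fin m × Fin m => p.1 ≤ p.2), F p =
      ∏ q ∈ pairs m, G q := by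
  rcases Nat.eq_zero_or_pos m with rfl | hm
  · have h2 : pairs 0 = ∅ := by
      ext p; simp only [mem_pairs, Finset.notMem_empty, iff_false]; omega
    rw [h2]
    rw [show (Finset.univ.filter (fun p : Fin 0 × Fin 0 => p.1 ≤ p.2)) = ∅ from
      Finset.eq_empty_of_forall_notMem (fun p => absurd p.1.isLt (by omega))]
    simp
  refine Finset.prod_nbij' (fun p => ((p.1 : ℕ), (p.2 : ℕ) + 1))
    (fun q => ((⟨q.1 % m, Nat.mod_lt _ hm⟩ : Fin m), (⟨(q.2 - 1) % m, Nat.mod_lt _ hm⟩ : Fin m)))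
    ?_ ?_ ?_ ?_ ?_
  · intro p hp
    rw [Finset.mem_filter] at hp
    rw [mem_pairs]
    have := hp.2
    rw [Fin.le_def] at this
    exact ⟨by omega, p.2.isLt⟩
  · intro q hq
    rw [mem_pairs] at hq
    rw [Finset.mem_filter]
    refine ⟨Finset.mem_univ _, ?_⟩
    rw [Fin.le_def]
    simp only
    have h1 : q.1 < m := by omega
    have h2 : q.2 - 1 < m := by omega
    rw [Nat.mod_eq_of_lt h1, Nat.mod_eq_of_lt h2]
    omega
  · intro p hp
    rw [Finset.mem_filter] at hp
    have h2 := hp.2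
    rw [Fin.le_def] at h2
    have h1 : (p.1 : ℕ) < m := p.1.isLt
    have h2' : (p.2 : ℕ) + 1 - 1 < m := by simpa using p.2.isLt
    ext
    · simp [Nat.mod_eq_of_lt h1]
    · simp [Nat.mod_eq_of_lt p.2.isLt]
  · intro q hq
    rw [mem_pairs] at hq
    have h1 : q.1 < m := by omega
    have h2 : q.2 - 1 < m := by omega
    ext
    · simp [Nat.mod_eq_of_lt h1]
    · simp only [Nat.mod_eq_of_lt h2]
      omega
  · intro p hp
    rw [Finset.mem_filter] at hp
    exact hFG p hp.2


lemma final (m : ℕ) (ε x : Fin m → ℝ) (hε : ∀ i, ε i = -1 ∨ ε i = 1)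
    (hx : ∀ i, x i ∈ Set.Icc (0 : ℝ) 1) :
    Qconf m ε x ≤
      ∏ p ∈ Finset.univ.filter (fun p : Fin m × Fin m => p.1 ≤ p.2),
        (1 - (-1 : ℝ) ^ ((p.2 : ℕ) - (p.1 : ℕ) + 1) *
          ∏ k ∈ Finset.Icc p.1 p.2, x k) := by
  classical
  set εe : ℕ → ℝ := fun k => if h : k < m then ε ⟨k, h⟩ else 1 with hεedef
  set xe : ℕ → ℝ := fun k => if h : k < m then x ⟨k, h⟩ else 0 with hxedef
  set σ : ℕ → ℝ := fun a => ∏ k ∈ Finset.range a, εe k with hσdef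
  have hεe1 : ∀ k, εe k = 1 ∨ εe k = -1 := by
    intro k
    by_cases h : k < m
    · rw [hεedef]; simp only [dif_pos h]
      rcases hε ⟨k, h⟩ with h' | h'
      · exact Or.inr h'
      · exact Or.inl h'
    · exact Or.inl (by rw [hεedef]; simp [h])
  have hσ : ∀ a, σ a = 1 ∨ σ a = -1 := fun a => prod_sign _ _ (fun k _ => hεe1 k)
  have hxe : ∀ k, 0 ≤ xe k ∧ xe k ≤ 1 := by
    intro k
    by_cases h : k < m
    · rw [hxedef]; simp only [dif_pos h]
      exact Set.mem_Icc.mp (hx ⟨k, h⟩)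
    · rw [hxedef]; simp only [dif_neg h]; norm_num
  have hσmul : ∀ a b : ℕ, a ≤ b → σ a * σ b = ∏ k ∈ Finset.Ico a b, εe k := by
    intro a b hab
    have h := Finset.prod_range_mul_prod_Ico εe hab
    have h2 : σ a * σ a = 1 := by rcases hσ a with h' | h' <;> rw [h'] <;> norm_num
    calc σ a * σ b = σ a * (σ a * ∏ k ∈ Finset.Ico a b, εe k) := by
          rw [hσdef]; simp only []; rw [← h]
      _ = (σ a * σ a) * ∏ k ∈ Finset.Ico a b, εe k := by ring
      _ = ∏ k ∈ Finset.Ico a b, εe k := by rw [h2, one_mul]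
  have hεfe : ∀ (k : ℕ) (h : k < m), εe k = ε ⟨k, h⟩ := fun k h => by
    rw [hεedef]; simp only [dif_pos h]
  have hxfe : ∀ (k : ℕ) (h : k < m), xe k = x ⟨k, h⟩ := fun k h => by
    rw [hxedef]; simp only [dif_pos h]
  have hL : Qconf m ε x = ∏ p ∈ pairs m, (1 - σ p.1 * σ p.2 * PP xe p.1 p.2) := by
    rw [Qconf]
    refine prod_pairs_fin _ _ (fun p hp => ?_)
    have hele : ((p.1 : ℕ)) ≤ (p.2 : ℕ) := by rwa [← Fin.le_def]
    rw [prod_fin_icc ε εe hεfe p.1 p.2, prod_fin_icc x xe hxfe p.1 p.2,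
      hσmul (p.1 : ℕ) ((p.2 : ℕ) + 1) (by omega)]
    rfl
  have hR : (∏ p ∈ Finset.univ.filter (fun p : Fin m × Fin m => p.1 ≤ p.2),
        (1 - (-1 : ℝ) ^ ((p.2 : ℕ) - (p.1 : ℕ) + 1) * ∏ k ∈ Finset.Icc p.1 p.2, x k)) =
      ∏ q ∈ pairs m, (1 - alt q.1 * alt q.2 * PP xe q.1 q.2) := by
    refine prod_pairs_fin _ _ (fun p hp => ?_)
    have hele : ((p.1 : ℕ)) ≤ (p.2 : ℕ) := by rwa [← Fin.le_def]
    have hsign : (-1 : ℝ) ^ ((p.2 : ℕ) - (p.1 : ℕ) + 1) = alt (p.1 : ℕ) * alt ((p.2 : ℕ) + 1) := by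
      rw [alt, alt, ← pow_add]
      have hexp : (p.1 : ℕ) + ((p.2 : ℕ) + 1) = ((p.2 : ℕ) - (p.1 : ℕ) + 1) + 2 * (p.1 : ℕ) := by
        omega
      have h2 : ((-1:ℝ)) ^ (2 * (p.1 : ℕ)) = 1 := by
        rw [pow_mul, neg_one_sq, one_pow]
      conv_rhs => rw [hexp, pow_add, h2]
      rw [mul_one]
    rw [prod_fin_icc x xe hxfe p.1 p.2, hsign]
    rfl
  rw [hL, hR]
  exact main m σ xe hσ hxe

end QP

theorem Qconf_le_Qconf_neg :
    ∀ n : ℕ, 2 ≤ n → ∀ ε : Fin (n - 1) → ℝ, (∀ i, ε i = -1 ∨ ε i = 1) →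
      ∀ x : Fin (n - 1) → ℝ, (∀ i, x i ∈ Set.Icc (0 : ℝ) 1) →
        Qconf (n - 1) ε x ≤
          ∏ p ∈ Finset.univ.filter (fun p : Fin (n - 1) × Fin (n - 1) => p.1 ≤ p.2),
            (1 - (-1 : ℝ) ^ ((p.2 : ℕ) - (p.1 : ℕ) + 1) *
              ∏ k ∈ Finset.Icc p.1 p.2, x k) :=
  fun n _ ε hε x hx => QP.final (n - 1) ε x hε hx
end
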